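/- Let n ≥ 2, D > 1, α ≥ 0 and m with n + 2 + α < 2m. Then ∫_{ℝⁿ₊} x_n² |x̃|^α / (|x̃|² + (x_n + D)² - 1)^m dx = ω_{n-1} · I_m^{n-2+α} · φ̂_{(2m-n-α+1)/2}, where ω_{n-1} is the surface measure of the unit sphere in ℝ^{n-1}, I_m^β = ∫₀^∞ r^β/(1+r²)^m dr, and φ̂_s = ∫_D^∞ (t - D)² (t²-1)^{-s} dt. -/

import Mathlib

open Real MeasureTheory
open Set Metric
open scoped ENNReal


lemma lintegral_fun_norm_addHaar' {E : Type*} [NormedAddCommGroup E] [NormedSpace ℝ E]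
    [MeasurableSpace E] [BorelSpace E] [Nontrivial E] [FiniteDimensional ℝ E]
    (μ : Measure E) [μ.IsAddHaarMeasure] (g : ℝ → ℝ≥0∞) (hg : Measurable g) :
    ∫⁻ x, g ‖x‖ ∂μ = (Module.finrank ℝ E) * μ (Metric.ball 0 1) *
      ∫⁻ y in Set.Ioi (0:ℝ), ENNReal.ofReal (y ^ (Module.finrank ℝ E - 1)) * g y := by
  have h1 : ∫⁻ x : ({0}ᶜ : Set E), g ‖x.1‖ ∂(μ.comap (↑)) = ∫⁻ x, g ‖x‖ ∂μ := by
    rw [lintegral_subtype_comap (measurableSet_singleton (0:E)).compl (fun x => g ‖x‖),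
      MeasureTheory.restrict_compl_singleton]
  rw [← h1]
  have h2 := μ.measurePreserving_homeomorphUnitSphereProd.lintegral_comp
    (f := fun p : sphere (0:E) 1 × Ioi (0:ℝ) => g p.2)
    ((hg.comp measurable_subtype_coe).comp measurable_snd)
  rw [show (∫⁻ x : ({0}ᶜ : Set E), g ‖x.1‖ ∂(μ.comap (↑))) =
      ∫⁻ x : ({0}ᶜ : Set E), (fun p : sphere (0:E) 1 × Ioi (0:ℝ) => g p.2)
        ((homeomorphUnitSphereProd E) x) ∂(μ.comap (↑)) from lintegral_congr fun x => by simp [homeomorphUnitSphereProd], h2]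
  rw [MeasureTheory.lintegral_prod (fun p : sphere (0:E) 1 × Ioi (0:ℝ) => g p.2)
    (by exact (hg.comp (measurable_subtype_coe.comp measurable_snd)).aemeasurable)]
  simp only [MeasureTheory.lintegral_const]
  have h3 : ∫⁻ y : Ioi (0:ℝ), g y.1 ∂(Measure.volumeIoiPow (Module.finrank ℝ E - 1)) =
      ∫⁻ y in Set.Ioi (0:ℝ), ENNReal.ofReal (y ^ (Module.finrank ℝ E - 1)) * g y := by
    rw [Measure.volumeIoiPow, lintegral_withDensity_eq_lintegral_mul _
      ((measurable_subtype_coe.pow_const _).ennreal_ofReal)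
      (by exact hg.comp measurable_subtype_coe : Measurable (fun y : Ioi (0:ℝ) => g y.1))]
    exact lintegral_subtype_comap (μ := (volume : Measure ℝ)) measurableSet_Ioi
      (fun y => ENNReal.ofReal (y ^ (Module.finrank ℝ E - 1)) * g y)
  rw [h3, Measure.toSphere_apply_univ]
  ring

lemma lintegral_pi_fun_sqrtsum (j : ℕ) (g : ℝ → ℝ≥0∞) (hg : Measurable g) :
    ∫⁻ y : (Fin (j+1) → ℝ), g (Real.sqrt (∑ i, y i ^ 2)) =
      ((j:ℝ≥0∞)+1) * volume (Metric.ball (0 : EuclideanSpace ℝ (Fin (j+1))) 1) *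
        ∫⁻ r in Set.Ioi (0:ℝ), ENNReal.ofReal (r ^ j) * g r := by
  have hψ := EuclideanSpace.volume_preserving_symm_measurableEquiv_toLp (Fin (j+1))
  have hm : Measurable (fun y : Fin (j+1) → ℝ => g (Real.sqrt (∑ i, y i ^ 2))) := by
    apply hg.comp
    fun_prop
  rw [← hψ.lintegral_comp hm]
  have : ∀ x : EuclideanSpace ℝ (Fin (j+1)),
      g (Real.sqrt (∑ i, ((MeasurableEquiv.toLp 2 (Fin (j+1) → ℝ)).symm x) i ^ 2)) = g ‖x‖ := by
    intro x
    rw [EuclideanSpace.norm_eq]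
    simp only [Real.norm_eq_abs, sq_abs]
    rfl
  rw [lintegral_congr this, lintegral_fun_norm_addHaar' volume g hg,
    finrank_euclideanSpace_fin]
  norm_num

lemma lintegral_Ioi_mul_left' {a : ℝ} (ha : 0 < a) (g : ℝ → ℝ≥0∞) (hg : Measurable g) :
    ∫⁻ x in Set.Ioi (0:ℝ), g x = ENNReal.ofReal a * ∫⁻ x in Set.Ioi (0:ℝ), g (a * x) := by
  have h1 : ∫⁻ y in Set.Ioi (0:ℝ), g y ∂(Measure.map (a * ·) volume) =
      ∫⁻ x in (a * ·)⁻¹' (Set.Ioi 0), g (a * x) :=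
    setLIntegral_map measurableSet_Ioi hg (measurable_const_mul a)
  rw [Real.map_volume_mul_left ha.ne', Measure.restrict_smul, lintegral_smul_measure,
    Set.preimage_const_mul_Ioi₀ _ ha, zero_div] at h1
  rw [← h1, smul_eq_mul, ← mul_assoc, ← ENNReal.ofReal_mul ha.le, abs_inv, abs_of_pos ha,
    mul_inv_cancel₀ ha.ne', ENNReal.ofReal_one, one_mul]

lemma lintegral_Ioi_add' (D : ℝ) (g : ℝ → ℝ≥0∞) (hg : Measurable g) :
    ∫⁻ s in Set.Ioi (0:ℝ), g (s + D) = ∫⁻ t in Set.Ioi D, g t := by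
  have h := (measurePreserving_add_right volume D).setLIntegral_comp_preimage
    (s := Set.Ioi D) measurableSet_Ioi hg
  rwa [show ((· + D)⁻¹' (Set.Ioi D) : Set ℝ) = Set.Ioi 0 by
    rw [Set.preimage_add_const_Ioi, sub_self]] at h

lemma inner_step (j : ℕ) (α m c : ℝ) (hα : 0 ≤ α) (hc : 0 < c) :
    ∫⁻ y : (Fin (j+1) → ℝ),
        ENNReal.ofReal ((∑ i, y i ^ 2) ^ (α/2) / ((∑ i, y i ^ 2) + c) ^ m) =
      ((j:ℝ≥0∞)+1) * volume (Metric.ball (0 : EuclideanSpace ℝ (Fin (j+1))) 1) *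
        (ENNReal.ofReal (c ^ (((j:ℝ) + 1 + α - 2*m)/2)) *
          ∫⁻ u in Set.Ioi (0:ℝ), ENNReal.ofReal (u ^ ((j:ℝ) + α) / (1 + u^2) ^ m)) := by
  set g : ℝ → ℝ≥0∞ := fun r => ENNReal.ofReal (r ^ α / (r^2 + c)^m) with hgdef
  have hg : Measurable g := by fun_prop
  have h1 : ∀ y : Fin (j+1) → ℝ,
      ENNReal.ofReal ((∑ i, y i ^ 2) ^ (α/2) / ((∑ i, y i ^ 2) + c) ^ m) =
        g (Real.sqrt (∑ i, y i ^ 2)) := by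
    intro y
    have hQ : (0:ℝ) ≤ ∑ i, y i ^ 2 := Finset.sum_nonneg fun i _ => sq_nonneg _
    rw [hgdef]
    simp only
    rw [Real.sq_sqrt hQ, Real.sqrt_eq_rpow, ← Real.rpow_mul hQ]
    ring_nf
  rw [lintegral_congr h1, lintegral_pi_fun_sqrtsum j g hg]
  have ha : 0 < Real.sqrt c := Real.sqrt_pos.2 hc
  set a := Real.sqrt c with hadef
  have ha2 : a ^ 2 = c := Real.sq_sqrt hc.le
  -- combine ofReal on Ioi 0
  have h2 : ∫⁻ r in Set.Ioi (0:ℝ), ENNReal.ofReal (r ^ j) * g r =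
      ∫⁻ r in Set.Ioi (0:ℝ), ENNReal.ofReal (r ^ j * (r ^ α / (r^2 + c)^m)) := by
    refine setLIntegral_congr_fun measurableSet_Ioi (fun r hr => ?_)
    rw [ENNReal.ofReal_mul (pow_nonneg (le_of_lt hr) j)]
  rw [h2, lintegral_Ioi_mul_left' ha _ (by fun_prop)]
  have h3 : ∫⁻ u in Set.Ioi (0:ℝ), ENNReal.ofReal ((a*u) ^ j * ((a*u) ^ α / ((a*u)^2 + c)^m)) =
      ENNReal.ofReal (a ^ ((j:ℝ) + α - 2*m)) *
        ∫⁻ u in Set.Ioi (0:ℝ), ENNReal.ofReal (u ^ ((j:ℝ) + α) / (1 + u^2) ^ m) := by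
    rw [← lintegral_const_mul _ (by fun_prop)]
    refine setLIntegral_congr_fun measurableSet_Ioi (fun u hu => ?_)
    rw [← ENNReal.ofReal_mul (Real.rpow_nonneg ha.le _)]
    congr 1
    have hu' : (0:ℝ) < u := hu
    have e1 : (a*u) ^ j = a ^ (j:ℝ) * u ^ (j:ℝ) := by
      rw [mul_pow, ← Real.rpow_natCast a, ← Real.rpow_natCast u]
    have e2 : (a*u) ^ α = a ^ α * u ^ α := Real.mul_rpow ha.le hu'.le
    have e3 : ((a*u)^2 + c)^m = (a^2)^m * (1 + u^2)^m := by
      rw [show (a*u)^2 + c = a^2 * (1 + u^2) by rw [← ha2]; ring,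
        Real.mul_rpow (sq_nonneg a) (by positivity)]
    rw [e1, e2, e3]
    rw [show (a^2)^m = a^(2*m) by
      rw [← Real.rpow_natCast a 2, ← Real.rpow_mul ha.le]; norm_num]
    rw [Real.rpow_sub ha, Real.rpow_add ha, Real.rpow_add hu']
    have hne1 : a ^ (2*m) ≠ 0 := (Real.rpow_pos_of_pos ha _).ne'
    have hne2 : (1 + u^2) ^ m ≠ 0 := (Real.rpow_pos_of_pos (by positivity) _).ne'
    field_simp
  rw [h3]
  have hac : a = c ^ (1/2 : ℝ) := by rw [hadef, Real.sqrt_eq_rpow]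
  have h4 : a * a ^ ((j:ℝ) + α - 2*m) = c ^ (((j:ℝ) + 1 + α - 2*m)/2) := by
    rw [show a * a ^ ((j:ℝ) + α - 2*m) = a ^ (1 + ((j:ℝ) + α - 2*m)) by
      rw [Real.rpow_add ha, Real.rpow_one], hac, ← Real.rpow_mul hc.le]
    congr 1
    ring
  rw [mul_assoc, ← mul_assoc (ENNReal.ofReal a), ← ENNReal.ofReal_mul ha.le, h4]
  ring

/-- Half-space integral formula with an `x_n²` weight: for `n + 2 + α < 2m`,
`∫_{ℝⁿ₊} x_n²|x̃|^α/(|x̃|²+(x_n+D)²-1)^m dx = ω_{n-1} I_m^{n-2+α} φ̂_{(2m-n-α+1)/2}`,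
where `ω_{n-1} = 2π^{(n-1)/2}/Γ((n-1)/2)`, `I_m^β = ∫₀^∞ r^β/(1+r²)^m dr` and
`φ̂_s = ∫_D^∞ (t-D)²(t²-1)^{-s} dt`. -/
theorem halfspace_weighted_integral_formula (n : ℕ) (hn : 2 ≤ n) (D α m : ℝ)
    (hD : 1 < D) (hα : 0 ≤ α) (h : (n : ℝ) + 2 + α < 2 * m) :
    (∫ x in {x : EuclideanSpace ℝ (Fin n) | 0 < x ⟨n - 1, by omega⟩},
        (x ⟨n - 1, by omega⟩) ^ 2 * (‖x‖ ^ 2 - (x ⟨n - 1, by omega⟩) ^ 2) ^ (α / 2) /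
          (‖x‖ ^ 2 + 2 * D * x ⟨n - 1, by omega⟩ + D ^ 2 - 1) ^ m) =
      (2 * Real.pi ^ (((n : ℝ) - 1) / 2) / Real.Gamma (((n : ℝ) - 1) / 2)) *
        (∫ r in Set.Ioi (0 : ℝ), r ^ ((n : ℝ) - 2 + α) / (1 + r ^ 2) ^ m) *
        (∫ t in Set.Ioi D, (t - D) ^ 2 * (t ^ 2 - 1) ^ (-((2 * m - (n : ℝ) - α + 1) / 2))) := by
  obtain ⟨j, rfl⟩ : ∃ j, n = j + 2 := ⟨n - 2, by omega⟩
  show (∫ x in {x : EuclideanSpace ℝ (Fin (j+2)) | 0 < x (Fin.last (j+1))},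
      (x (Fin.last (j+1))) ^ 2 * (‖x‖ ^ 2 - (x (Fin.last (j+1))) ^ 2) ^ (α / 2) /
        (‖x‖ ^ 2 + 2 * D * x (Fin.last (j+1)) + D ^ 2 - 1) ^ m) =
    (2 * Real.pi ^ ((((j+2:ℕ):ℝ) - 1) / 2) / Real.Gamma ((((j+2:ℕ):ℝ) - 1) / 2)) *
      (∫ r in Set.Ioi (0:ℝ), r ^ (((j+2:ℕ):ℝ) - 2 + α) / (1 + r ^ 2) ^ m) *
      (∫ t in Set.Ioi D, (t - D) ^ 2 * (t ^ 2 - 1) ^ (-((2 * m - ((j+2:ℕ):ℝ) - α + 1) / 2)))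
  simp only [show (((j+2:ℕ):ℝ) - 2 + α) = (j:ℝ) + α from by push_cast; ring,
    show -((2*m - ((j+2:ℕ):ℝ) - α + 1)/2) = ((j:ℝ) + 1 + α - 2*m)/2 from by push_cast; ring]
  set L : Fin (j+2) := Fin.last (j+1) with hLdef
  have hD0 : (0:ℝ) < D := lt_trans one_pos hD
  set f : EuclideanSpace ℝ (Fin (j+2)) → ℝ := fun x =>
    (x L) ^ 2 * (‖x‖ ^ 2 - (x L) ^ 2) ^ (α / 2) /
      (‖x‖ ^ 2 + 2 * D * x L + D ^ 2 - 1) ^ m with hfdef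
  set S : Set (EuclideanSpace ℝ (Fin (j+2))) := {x | 0 < x L} with hSdef
  have hSm : MeasurableSet S := measurableSet_lt measurable_const (by fun_prop)
  have hfm : Measurable f := by rw [hfdef]; fun_prop
  -- Step A: to lintegral
  have stepA : ∫ x in S, f x = (∫⁻ x in S, ENNReal.ofReal (f x)).toReal := by
    rw [integral_eq_lintegral_of_nonneg_ae ?_ hfm.aestronglyMeasurable]
    filter_upwards [ae_restrict_mem hSm] with x hx
    have hx' : 0 < x L := hx
    have hsum : (x L)^2 ≤ ‖x‖^2 := by
      rw [EuclideanSpace.norm_eq, Real.sq_sqrt (Finset.sum_nonneg fun i _ => sq_nonneg _)]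
      simpa [Real.norm_eq_abs, sq_abs] using
        Finset.single_le_sum (f := fun i => x i ^ 2) (fun i _ => sq_nonneg _) (Finset.mem_univ L)
    have hden : 0 < ‖x‖^2 + 2*D*(x L) + D^2 - 1 := by
      nlinarith [sq_nonneg ‖x‖,
        mul_pos (sub_pos.2 hD) (by linarith : (0:ℝ) < D + 1), mul_pos hD0 hx']
    rw [hfdef]
    exact div_nonneg (mul_nonneg (sq_nonneg _) (Real.rpow_nonneg (by linarith) _))
      (Real.rpow_pos_of_pos hden m).le
  -- Step B: transport to product space
  set T : EuclideanSpace ℝ (Fin (j+2)) → ℝ × (Fin (j+1) → ℝ) := fun x =>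
    (MeasurableEquiv.piFinSuccAbove (fun _ : Fin (j+2) => ℝ) L)
      (((MeasurableEquiv.toLp 2 (Fin (j+2) → ℝ)).symm) x) with hTdef
  have hT : MeasurePreserving T volume ((volume : Measure ℝ).prod (volume : Measure (Fin (j+1) → ℝ))) := by
    rw [← Measure.volume_eq_prod]
    exact (volume_preserving_piFinSuccAbove (fun _ : Fin (j+2) => ℝ) L).comp
      (EuclideanSpace.volume_preserving_symm_measurableEquiv_toLp (Fin (j+2)))
  set F : ℝ × (Fin (j+1) → ℝ) → ℝ≥0∞ := fun p =>
    ENNReal.ofReal (p.1^2 * ((∑ i, p.2 i ^ 2) ^ (α/2) /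
      ((∑ i, p.2 i ^ 2) + (p.1 + D)^2 - 1) ^ m)) with hFdef
  have hFm : Measurable F := by rw [hFdef]; fun_prop
  have hfe : ∀ x, ENNReal.ofReal (f x) = F (T x) := by
    intro x
    have hnorm : ‖x‖^2 = (x L)^2 + ∑ i, x (L.succAbove i) ^ 2 := by
      rw [EuclideanSpace.norm_eq, Real.sq_sqrt (Finset.sum_nonneg fun i _ => sq_nonneg _)]
      simp only [Real.norm_eq_abs, sq_abs]
      exact Fin.sum_univ_succAbove (fun i => x i ^ 2) L
    show ENNReal.ofReal (f x) = ENNReal.ofReal ((x L)^2 * ((∑ i, x (L.succAbove i) ^ 2) ^ (α/2) /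
      ((∑ i, x (L.succAbove i) ^ 2) + ((x L) + D)^2 - 1) ^ m))
    rw [hfdef]
    simp only
    have e1 : ‖x‖^2 - (x L)^2 = ∑ i, x (L.succAbove i)^2 := by rw [hnorm]; ring
    have e2 : ‖x‖^2 + 2*D*(x L) + D^2 - 1 = (∑ i, x (L.succAbove i)^2) + ((x L) + D)^2 - 1 := by
      rw [hnorm]; ring
    rw [e1, e2, mul_div_assoc]
  have hpre : T ⁻¹' (Set.Ioi (0:ℝ) ×ˢ (Set.univ : Set (Fin (j+1) → ℝ))) = S := by
    ext x
    simp only [Set.mem_preimage, Set.mem_prod, Set.mem_univ, and_true, Set.mem_Ioi, hSdef,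
      Set.mem_setOf_eq]
    exact Iff.rfl
  have stepB : ∫⁻ x in S, ENNReal.ofReal (f x) =
      ∫⁻ p in Set.Ioi (0:ℝ) ×ˢ (Set.univ : Set (Fin (j+1) → ℝ)), F p
        ∂((volume : Measure ℝ).prod volume) := by
    rw [lintegral_congr hfe, ← hpre]
    exact hT.setLIntegral_comp_preimage (measurableSet_Ioi.prod MeasurableSet.univ) hFm
  have stepC : ∫⁻ p in Set.Ioi (0:ℝ) ×ˢ (Set.univ : Set (Fin (j+1) → ℝ)), F p
        ∂((volume : Measure ℝ).prod volume) =
      ∫⁻ s in Set.Ioi (0:ℝ), ∫⁻ y, F (s, y) := by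
    rw [← Measure.prod_restrict, Measure.restrict_univ]
    exact lintegral_prod F hFm.aemeasurable
  have hinner : ∀ s ∈ Set.Ioi (0:ℝ), (∫⁻ y, F (s, y)) =
      (((j:ℝ≥0∞)+1) * volume (Metric.ball (0 : EuclideanSpace ℝ (Fin (j+1))) 1) *
        ∫⁻ u in Set.Ioi (0:ℝ), ENNReal.ofReal (u ^ ((j:ℝ) + α) / (1 + u^2) ^ m)) *
        ENNReal.ofReal (s^2 * ((s+D)^2 - 1) ^ (((j:ℝ) + 1 + α - 2*m)/2)) := by
    intro s hs
    have hs' : (0:ℝ) < s := hs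
    have hc : 0 < (s+D)^2 - 1 := by nlinarith
    have hpt : ∀ y : Fin (j+1) → ℝ, F (s, y) = ENNReal.ofReal (s^2) *
        ENNReal.ofReal ((∑ i, y i ^2)^(α/2) / ((∑ i, y i ^2) + ((s+D)^2 - 1))^m) := by
      intro y
      rw [hFdef]
      simp only
      rw [show (∑ i, y i ^ 2) + (s+D)^2 - 1 = (∑ i, y i ^ 2) + ((s+D)^2 - 1) from by ring,
        ENNReal.ofReal_mul (sq_nonneg s)]
    rw [lintegral_congr hpt, lintegral_const_mul _ (by fun_prop),
      inner_step j α m _ hα hc, ENNReal.ofReal_mul (sq_nonneg s)]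
    ring
  have houter : (∫⁻ s in Set.Ioi (0:ℝ), ∫⁻ y, F (s, y)) =
      (((j:ℝ≥0∞)+1) * volume (Metric.ball (0 : EuclideanSpace ℝ (Fin (j+1))) 1) *
        ∫⁻ u in Set.Ioi (0:ℝ), ENNReal.ofReal (u ^ ((j:ℝ) + α) / (1 + u^2) ^ m)) *
        ∫⁻ t in Set.Ioi D, ENNReal.ofReal ((t - D)^2 * (t^2-1) ^ (((j:ℝ) + 1 + α - 2*m)/2)) := by
    rw [setLIntegral_congr_fun measurableSet_Ioi hinner,
      lintegral_const_mul _ (show Measurable fun s : ℝ =>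
        ENNReal.ofReal (s^2 * ((s+D)^2 - 1) ^ (((j:ℝ) + 1 + α - 2*m)/2)) by fun_prop)]
    congr 1
    have hcomp : ∀ s : ℝ, ENNReal.ofReal (s^2 * ((s+D)^2 - 1) ^ (((j:ℝ) + 1 + α - 2*m)/2)) =
        (fun t : ℝ => ENNReal.ofReal ((t - D)^2 * (t^2-1) ^ (((j:ℝ) + 1 + α - 2*m)/2))) (s + D) := by
      intro s
      simp only
      rw [add_sub_cancel_right]
    rw [lintegral_congr hcomp]
    exact lintegral_Ioi_add' D (fun t => ENNReal.ofReal ((t - D)^2 *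
      (t^2-1) ^ (((j:ℝ) + 1 + α - 2*m)/2))) (by fun_prop)
  -- volume of the unit ball
  have hvol : (volume (Metric.ball (0 : EuclideanSpace ℝ (Fin (j+1))) 1)) =
      ENNReal.ofReal (Real.sqrt Real.pi ^ (j+1) / Real.Gamma (((j+1:ℕ):ℝ)/2 + 1)) := by
    rw [EuclideanSpace.volume_ball]
    simp [Fintype.card_fin]
  have hK : (((j:ℝ≥0∞)+1)).toReal *
        (volume (Metric.ball (0 : EuclideanSpace ℝ (Fin (j+1))) 1)).toReal =
      2 * Real.pi ^ ((((j+2:ℕ):ℝ) - 1) / 2) / Real.Gamma ((((j+2:ℕ):ℝ) - 1) / 2) := by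
    have hΓpos1 : 0 < Real.Gamma (((j+1:ℕ):ℝ)/2 + 1) := Real.Gamma_pos_of_pos (by positivity)
    rw [hvol, ENNReal.toReal_ofReal
      (div_nonneg (pow_nonneg (Real.sqrt_nonneg _) _) hΓpos1.le),
      show ((j:ℝ≥0∞)+1) = ((j+1:ℕ):ℝ≥0∞) from by push_cast; ring, ENNReal.toReal_natCast]
    set q : ℝ := ((j+1:ℕ):ℝ) with hqdef
    have hq : 0 < q := by rw [hqdef]; positivity
    have hq2 : ((((j+2:ℕ):ℝ)) - 1)/2 = q/2 := by rw [hqdef]; push_cast; ring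
    have hsqrt : Real.sqrt Real.pi ^ (j+1) = Real.pi ^ (q/2) := by
      rw [Real.sqrt_eq_rpow, ← Real.rpow_natCast (Real.pi ^ ((1:ℝ)/2)) (j+1),
        ← Real.rpow_mul Real.pi_pos.le]
      congr 1
      rw [hqdef]; push_cast; ring
    have hΓ : Real.Gamma (q/2 + 1) = (q/2) * Real.Gamma (q/2) :=
      Real.Gamma_add_one (by positivity)
    have hΓpos : 0 < Real.Gamma (q/2) := Real.Gamma_pos_of_pos (by positivity)
    rw [hq2, hsqrt, hΓ]
    field_simp
  have hI : ∫ r in Set.Ioi (0:ℝ), r ^ ((j:ℝ) + α) / (1 + r ^ 2) ^ m =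
      (∫⁻ u in Set.Ioi (0:ℝ), ENNReal.ofReal (u ^ ((j:ℝ) + α) / (1 + u^2) ^ m)).toReal := by
    rw [integral_eq_lintegral_of_nonneg_ae ?_
      (by fun_prop : Measurable fun r : ℝ => r ^ ((j:ℝ)+α)/(1+r^2)^m).aestronglyMeasurable]
    filter_upwards [ae_restrict_mem measurableSet_Ioi] with r hr
    exact div_nonneg (Real.rpow_nonneg (le_of_lt hr) _) (Real.rpow_pos_of_pos (by positivity) _).le
  have hΦ : ∫ t in Set.Ioi D, (t - D)^2 * (t^2-1) ^ (((j:ℝ) + 1 + α - 2*m)/2) =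
      (∫⁻ t in Set.Ioi D, ENNReal.ofReal ((t - D)^2 * (t^2-1) ^ (((j:ℝ) + 1 + α - 2*m)/2))).toReal := by
    rw [integral_eq_lintegral_of_nonneg_ae ?_
      (by fun_prop : Measurable fun t : ℝ => (t-D)^2 * (t^2-1) ^ (((j:ℝ)+1+α-2*m)/2)).aestronglyMeasurable]
    filter_upwards [ae_restrict_mem measurableSet_Ioi] with t ht
    have ht' : 1 < t := lt_trans hD ht
    exact mul_nonneg (sq_nonneg _) (Real.rpow_nonneg (by nlinarith) _)
  rw [stepA, stepB, stepC, houter, ENNReal.toReal_mul, ENNReal.toReal_mul, ENNReal.toReal_mul,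
    hK, hI, hΦ]
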